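/- If m = p₁p₂⋯p_ℓ is squarefree, then all sublattices of ℤⁿ of index m are equivalent under unimodular transformations, i.e., there is exactly one equivalence class. -/

import Mathlib

/-- Two sublattices of `ℤⁿ` are equivalent if an automorphism of `ℤⁿ` maps one onto
the other. -/
def latticeEquiv (n : ℕ) (H K : Submodule ℤ (Fin n → ℤ)) : Prop :=
  ∃ σ : (Fin n → ℤ) ≃ₗ[ℤ] (Fin n → ℤ), H.map (σ : (Fin n → ℤ) →ₗ[ℤ] (Fin n → ℤ)) = K


open Monoid Submodule

lemma isAddCyclic_of_squarefree_card {G : Type*} [AddCommGroup G] [Finite G]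
    (h : Squarefree (Nat.card G)) : IsAddCyclic G := by
  apply IsAddCyclic.of_exponent_eq_card
  apply Nat.dvd_antisymm (AddGroup.exponent_dvd_nat_card)
  have := Fintype.ofFinite G
  conv_lhs => rw [← Nat.prod_primeFactors_of_squarefree h]
  refine Finset.prod_primes_dvd _
    (fun p hp => (Nat.prime_of_mem_primeFactors hp).prime) (fun p hp => ?_)
  have hp' := Nat.prime_of_mem_primeFactors hp
  have hpdvd : p ∣ Fintype.card G := by
    rw [← Nat.card_eq_fintype_card]; exact Nat.dvd_of_mem_primeFactors hp
  have : Fact p.Prime := ⟨hp'⟩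
  obtain ⟨g, hg⟩ := exists_prime_addOrderOf_dvd_card p hpdvd
  rw [← hg]
  exact AddMonoid.addOrder_dvd_exponent g

noncomputable section

lemma key (n m : ℕ) (hm0 : m ≠ 0) (hm1 : m ≠ 1) (H : Submodule ℤ (Fin n → ℤ))
    (hH : H.toAddSubgroup.index = m)
    (hcyc : IsAddCyclic ((Fin n → ℤ) ⧸ H.toAddSubgroup)) :
    ∃ e : (Fin n → ℤ) ≃ₗ[ℤ] ((Fin (n-1) → ℤ) × ℤ),
      H.map (e : (Fin n → ℤ) →ₗ[ℤ] ((Fin (n-1) → ℤ) × ℤ))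
        = (⊤ : Submodule ℤ (Fin (n-1) → ℤ)).prod (Ideal.span {(m : ℤ)}) := by
  set G := (Fin n → ℤ) ⧸ H.toAddSubgroup with hG
  have hcard : Nat.card G = m := by rw [← hH, AddSubgroup.index]
  have ι : ZMod m ≃+ G := hcard ▸ zmodAddCyclicAddEquiv hcyc
  set φ : (Fin n → ℤ) →+ ZMod m :=
    (ι.symm.toAddMonoidHom).comp (QuotientAddGroup.mk' H.toAddSubgroup) with hφ
  have hφsurj : Function.Surjective φ :=
    ι.symm.surjective.comp (QuotientAddGroup.mk'_surjective _)
  have hφker : ∀ x, φ x = 0 ↔ x ∈ H := by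
    intro x
    rw [hφ, AddMonoidHom.comp_apply]
    show ι.symm _ = 0 ↔ _
    rw [show (0 : ZMod m) = ι.symm 0 by simp, ι.symm.injective.eq_iff]
    rw [QuotientAddGroup.mk'_apply, QuotientAddGroup.eq_zero_iff]
    rfl
  -- coefficients
  set c : Fin n → ℤ := fun i => ((φ (Pi.single i 1)).val : ℤ) with hc
  have hcast : ∀ i, ((c i : ℤ) : ZMod m) = φ (Pi.single i 1) := by
    intro i
    have : NeZero m := ⟨hm0⟩
    simp [hc, ZMod.natCast_val, ZMod.intCast_cast, ZMod.intCast_zmod_cast]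
  have hφeq : ∀ x, φ x = (((∑ i, c i * x i : ℤ)) : ZMod m) := by
    intro x
    have hx : x = ∑ i, x i • Pi.single i 1 := by
      conv_lhs => rw [← Finset.univ_sum_single x]
      congr 1
      ext i j
      simp [Pi.single_apply, smul_ite]
    conv_lhs => rw [hx, map_sum]
    have h1 : ∀ i, φ (x i • Pi.single i 1) = ((c i * x i : ℤ) : ZMod m) := by
      intro i
      rw [AddMonoidHom.map_zsmul, ← hcast i, zsmul_eq_mul]
      push_cast
      ring
    rw [Finset.sum_congr rfl fun i _ => h1 i]
    push_cast
    ring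
  -- gcd of coefficients
  set g : ℤ := Finset.univ.gcd c with hg
  have hgdvd : ∀ i, g ∣ c i := fun i => Finset.gcd_dvd (Finset.mem_univ i)
  have hcop : IsCoprime g (m : ℤ) := by
    obtain ⟨x, hx⟩ := hφsurj 1
    rw [hφeq x] at hx
    rw [show (1 : ZMod m) = ((1 : ℤ) : ZMod m) by push_cast; rfl,
      ZMod.intCast_eq_intCast_iff] at hx
    obtain ⟨k, hk⟩ := hx.dvd
    obtain ⟨t, ht⟩ : g ∣ ∑ i, c i * x i :=
      Finset.dvd_sum fun i _ => (hgdvd i).mul_right (x i)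
    exact ⟨t, k, by rw [mul_comm t g, ← ht, mul_comm k (m:ℤ)]; linarith⟩
  have hgne : g ≠ 0 := by
    intro h0
    rw [h0, isCoprime_zero_left, Int.isUnit_iff] at hcop
    rcases hcop with h | h
    · exact hm1 (by exact_mod_cast h)
    · omega
  -- reduced coefficients and the linear form
  set c' : Fin n → ℤ := fun i => c i / g with hc'
  have hgc' : ∀ i, g * c' i = c i := fun i => Int.mul_ediv_cancel' (hgdvd i)
  set f₁ : (Fin n → ℤ) →ₗ[ℤ] ℤ := ∑ i, (c' i) • (LinearMap.proj i) with hf₁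
  have hf₁app : ∀ x, f₁ x = ∑ i, c' i * x i := by
    intro x
    rw [hf₁]
    simp [LinearMap.sum_apply, LinearMap.proj_apply, smul_eq_mul]
  have hmemH : ∀ x, x ∈ H ↔ (m : ℤ) ∣ f₁ x := by
    intro x
    rw [← hφker x, hφeq x, ZMod.intCast_zmod_eq_zero_iff_dvd]
    have : ∑ i, c i * x i = g * f₁ x := by
      rw [hf₁app, Finset.mul_sum]
      exact Finset.sum_congr rfl fun i _ => by rw [← hgc' i]; ring
    rw [this]
    constructor
    · intro h
      exact (hcop.symm).dvd_of_dvd_mul_left h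
    · intro h
      exact h.mul_left g
  -- surjectivity of f₁
  obtain ⟨y, hy⟩ : ∃ y, f₁ y = 1 := by
    have hrange : LinearMap.range f₁ = ⊤ := by
      have hprin : (LinearMap.range f₁).IsPrincipal := inferInstance
      set d : ℤ := Submodule.IsPrincipal.generator (LinearMap.range f₁) with hd
      have hdvd : ∀ i, d ∣ c' i := by
        intro i
        have : c' i ∈ LinearMap.range f₁ := by
          refine ⟨Pi.single i 1, ?_⟩
          rw [hf₁app]
          simp [Pi.single_apply]
        rwa [Submodule.IsPrincipal.mem_iff_generator_dvd] at this
      have hdu : IsUnit d := by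
        have h1 : g * d ∣ g := by
          rw [hg]
          apply Finset.dvd_gcd
          intro i _
          rw [← hgc' i]
          exact mul_dvd_mul_left g (hdvd i)
        have h1' : g * d ∣ g * 1 := by rwa [mul_one]
        exact isUnit_of_dvd_one ((mul_dvd_mul_iff_left hgne).mp h1')
      rw [← Submodule.IsPrincipal.span_singleton_generator (LinearMap.range f₁)]
      exact Ideal.span_singleton_eq_top.mpr hdu
    obtain ⟨y, hy⟩ := (LinearMap.range_eq_top.mp hrange) 1
    exact ⟨y, hy⟩
  -- the splitting ℤⁿ ≃ ker f₁ × ℤ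
  set T := LinearMap.ker f₁ with hT
  set sub1 : (Fin n → ℤ) →ₗ[ℤ] (Fin n → ℤ) := LinearMap.id - f₁.smulRight y with hsub1
  have hmem : ∀ x, sub1 x ∈ T := by
    intro x
    rw [hT, LinearMap.mem_ker]
    have h' : sub1 x = x - f₁ x • y := rfl
    rw [h', map_sub, map_smul, hy, smul_eq_mul, mul_one, sub_self]
  set fwd : (Fin n → ℤ) →ₗ[ℤ] T × ℤ :=
    LinearMap.prod (sub1.codRestrict T hmem) f₁ with hfwd
  set bwd : T × ℤ →ₗ[ℤ] (Fin n → ℤ) :=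
    T.subtype.comp (LinearMap.fst ℤ T ℤ) + (LinearMap.snd ℤ T ℤ).smulRight y with hbwd
  have hcomp1 : fwd.comp bwd = LinearMap.id := by
    apply LinearMap.ext
    rintro ⟨⟨k, hk⟩, t⟩
    have hfk : f₁ k = 0 := hk
    have hf : f₁ (k + t • y) = t := by
      rw [map_add, map_smul, hy, hfk, smul_eq_mul, mul_one, zero_add]
    refine Prod.ext ?_ ?_
    · apply Subtype.ext
      show sub1 (k + t • y) = k
      have h' : sub1 (k + t • y) = (k + t • y) - f₁ (k + t • y) • y := rfl
      rw [h', hf]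
      abel
    · show f₁ (k + t • y) = t
      exact hf
  have hcomp2 : bwd.comp fwd = LinearMap.id := by
    apply LinearMap.ext
    intro x
    show (sub1 x) + f₁ x • y = x
    have h' : sub1 x = x - f₁ x • y := rfl
    rw [h']
    abel
  set e0 : (Fin n → ℤ) ≃ₗ[ℤ] T × ℤ := (LinearEquiv.ofLinear bwd fwd hcomp2 hcomp1).symm with he0
  -- basis of T and rank count
  obtain ⟨r, b⟩ := Submodule.basisOfPid (Pi.basisFun ℤ (Fin n)) T
  have hfin : Module.Finite ℤ T := Module.Finite.of_basis b
  have hfree : Module.Free ℤ T := Module.Free.of_basis b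
  have hn : n = r + 1 := by
    have h2 := e0.finrank_eq
    rw [Module.finrank_prod, Module.finrank_self, Module.finrank_eq_card_basis b,
      Fintype.card_fin, Module.finrank_fin_fun] at h2
    exact h2
  set b' : Module.Basis (Fin (n - 1)) ℤ T := b.reindex (finCongr (by omega)) with hb'
  set e : (Fin n → ℤ) ≃ₗ[ℤ] (Fin (n - 1) → ℤ) × ℤ :=
    e0.trans (b'.equivFun.prodCongr (LinearEquiv.refl ℤ ℤ)) with he
  refine ⟨e, ?_⟩
  have hsnd : ∀ x, (e x).2 = f₁ x := fun x => rfl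
  ext z
  rw [Submodule.mem_map_equiv, hmemH]
  have hz2 : f₁ (e.symm z) = z.2 := by
    rw [← hsnd (e.symm z), e.apply_symm_apply]
  rw [hz2, Submodule.mem_prod]
  simp [Ideal.mem_span_singleton]

/-- If `m` is squarefree, then any two sublattices of `ℤⁿ` of index `m` are equivalent
under a unimodular transformation. -/
theorem sublattices_equiv_of_squarefree (n m : ℕ) (hm : Squarefree m)
    (H K : Submodule ℤ (Fin n → ℤ))
    (hH : H.toAddSubgroup.index = m) (hK : K.toAddSubgroup.index = m) :
    latticeEquiv n H K := by
  have hm0 : m ≠ 0 := hm.ne_zero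
  by_cases hm1 : m = 1
  · subst hm1
    have htop : ∀ (L : Submodule ℤ (Fin n → ℤ)), L.toAddSubgroup.index = 1 → L = ⊤ := by
      intro L hL
      have h := AddSubgroup.index_eq_one.mp hL
      rw [Submodule.eq_top_iff']
      intro x
      have : x ∈ L.toAddSubgroup := by rw [h]; trivial
      exact this
    refine ⟨LinearEquiv.refl ℤ _, ?_⟩
    rw [htop H hH, htop K hK]
    simp
  · have cyc : ∀ (L : Submodule ℤ (Fin n → ℤ)), L.toAddSubgroup.index = m →
        IsAddCyclic ((Fin n → ℤ) ⧸ L.toAddSubgroup) := by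
      intro L hL
      have hcard : Nat.card ((Fin n → ℤ) ⧸ L.toAddSubgroup) = m := by
        rw [← hL, AddSubgroup.index]
      have : Finite ((Fin n → ℤ) ⧸ L.toAddSubgroup) :=
        Nat.finite_of_card_ne_zero (by rw [hcard]; exact hm0)
      exact isAddCyclic_of_squarefree_card (by rw [hcard]; exact hm)
    obtain ⟨eH, hEH⟩ := key n m hm0 hm1 H hH (cyc H hH)
    obtain ⟨eK, hEK⟩ := key n m hm0 hm1 K hK (cyc K hK)
    refine ⟨eH.trans eK.symm, ?_⟩
    have h1 : H.map ((eH.trans eK.symm : (Fin n → ℤ) →ₗ[ℤ] (Fin n → ℤ)))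
        = (H.map (eH : (Fin n → ℤ) →ₗ[ℤ] ((Fin (n-1) → ℤ) × ℤ))).map
            (eK.symm : ((Fin (n-1) → ℤ) × ℤ) →ₗ[ℤ] (Fin n → ℤ)) := by
      rw [← Submodule.map_comp]
      rfl
    rw [h1, hEH, ← hEK, ← Submodule.map_comp]
    simp

end
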